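/- Let A, B ∈ SU(2) with A·B = B·A and A ≠ ±1. Then B·P_A·B⁻¹ = P_A, where P_A is from the unique decomposition A = (cos θ_A)·1 + (sin θ_A)·P_A with θ_A ∈ (0,π) and P_A ∈ su(2). -/

import Mathlib

open Matrix Real Set

/-- `SU2` is the group of 2×2 complex unitary matrices of determinant 1. -/
noncomputable abbrev SU2 : Submonoid (Matrix (Fin 2) (Fin 2) ℂ) :=
  Matrix.specialUnitaryGroup (Fin 2) ℂ

/-- If `A, B ∈ SU(2)` commute and `A ≠ ±1`, with `A = (cos θ)·1 + (sin θ)·P` the unique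
decomposition of `A` (`θ ∈ (0,π)`, `P ∈ su(2)`), then `B·P·B⁻¹ = P`. -/
theorem su2_commuting_fixes_axis
    (A B : Matrix (Fin 2) (Fin 2) ℂ) (hA : A ∈ SU2) (hB : B ∈ SU2)
    (hcomm : A * B = B * A) (h1 : A ≠ 1) (h2 : A ≠ -1)
    (θ : ℝ) (P : Matrix (Fin 2) (Fin 2) ℂ)
    (hθ : θ ∈ Set.Ioo 0 π) (hP1 : Pᴴ = -P) (hP2 : P.trace = 0)
    (hdec : A = Real.cos θ • (1 : Matrix (Fin 2) (Fin 2) ℂ) + Real.sin θ • P) :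
    B * P * B⁻¹ = P := by
  have hsin : Real.sin θ ≠ 0 := ne_of_gt (Real.sin_pos_of_pos_of_lt_pi hθ.1 hθ.2)
  have hdetB : B.det = 1 := (Matrix.mem_specialUnitaryGroup_iff.mp hB).2
  have hBinv : B * B⁻¹ = 1 := Matrix.mul_nonsing_inv B (by simp [hdetB])
  have hPB : P * B = B * P := by
    have h : (Real.sin θ • P) * B = B * (Real.sin θ • P) := by
      have := hcomm
      rw [hdec] at this
      calc (Real.sin θ • P) * B
          = (Real.cos θ • (1 : Matrix (Fin 2) (Fin 2) ℂ) + Real.sin θ • P) * B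
            - (Real.cos θ • (1 : Matrix (Fin 2) (Fin 2) ℂ)) * B := by noncomm_ring
        _ = B * (Real.cos θ • (1 : Matrix (Fin 2) (Fin 2) ℂ) + Real.sin θ • P)
            - B * (Real.cos θ • (1 : Matrix (Fin 2) (Fin 2) ℂ)) := by
              rw [this]; congr 1; rw [Matrix.smul_mul, Matrix.mul_smul, one_mul, mul_one]
        _ = B * (Real.sin θ • P) := by noncomm_ring
    rw [Matrix.smul_mul, Matrix.mul_smul] at h
    exact smul_right_injective _ hsin h
  rw [← hPB, mul_assoc, hBinv, mul_one]
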